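/- Let 0 ≤ r ≤ N. Every vertex function V supported on the Hamming sphere Σ_r can be written as V = Σ_{k=0}^{r} A₊^{r−k}W_k with W_k ∈ W_k for each 0 ≤ k ≤ r. Moreover, for any choice of W_k ∈ W_k (0 ≤ k ≤ r), the vectors A₊^{r−k}W_k are pairwise orthogonal in ℓ²(Σ_r). -/

import Mathlib

open Finset

/-- Outer adjacency operator on vertex functions of the Boolean hypercube `B_N`:
`(A₊V)(S) = Σ_{s∈S} V(S∖{s})`. -/
def Aplus (N : ℕ) (V : Finset (Fin N) → ℝ) : Finset (Fin N) → ℝ :=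
  fun S => ∑ s ∈ S, V (S.erase s)

/-- Inner adjacency operator: `(A₋V)(R) = Σ_{b∉R} V(R∪{b})`. -/
def Aminus (N : ℕ) (V : Finset (Fin N) → ℝ) : Finset (Fin N) → ℝ :=
  fun R => ∑ b ∈ Rᶜ, V (insert b R)

/-- Adjacency operator `A = A₊ + A₋`. -/
def Adj (N : ℕ) (V : Finset (Fin N) → ℝ) : Finset (Fin N) → ℝ :=
  fun S => Aplus N V S + Aminus N V S

/-- Graph Laplacian `L = N·I − A`. -/
def Lap (N : ℕ) (V : Finset (Fin N) → ℝ) : Finset (Fin N) → ℝ :=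
  fun S => (N : ℝ) * V S - Adj N V S

/-- Inner product `⟨V,U⟩ = Σ_S V(S)U(S)` on vertex functions. -/
def inner' (N : ℕ) (V U : Finset (Fin N) → ℝ) : ℝ :=
  ∑ S : Finset (Fin N), V S * U S

/-- `V` is supported on the Hamming sphere `Σ_r` (vanishes off sets of cardinality `r`). -/
def suppOn (N r : ℕ) (V : Finset (Fin N) → ℝ) : Prop :=
  ∀ S : Finset (Fin N), S.card ≠ r → V S = 0

/-- Membership in `W_r`: supported on `Σ_r` and orthogonal to `A₊ℓ²(Σ_{r−1})`.
(For `r = 0` the orthogonality condition is vacuous, so `W_0 = ℓ²(Σ_0)`.) -/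
def memW (N r : ℕ) (W : Finset (Fin N) → ℝ) : Prop :=
  suppOn N r W ∧
    ∀ U : Finset (Fin N) → ℝ, suppOn N (r - 1) U → inner' N W (Aplus N U) = 0

/-- `m(r,k) = Σ_{j=0}^{k} (N − 2(r+j))`. -/
def mcoef (N r k : ℕ) : ℝ :=
  ∑ j ∈ Finset.range (k + 1), ((N : ℝ) - 2 * ((r : ℝ) + (j : ℝ)))

/-- Hadamard vector `H_S(R) = (−1)^{|R∩S|}`. -/
def Had (N : ℕ) (S R : Finset (Fin N)) : ℝ := (-1 : ℝ) ^ (R ∩ S).card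

/-- Spatial truncation `Q_K`: restriction to the Hamming ball of radius `K`. -/
def QK (N K : ℕ) (V : Finset (Fin N) → ℝ) : Finset (Fin N) → ℝ :=
  fun S => if S.card ≤ K then V S else 0

/-- Spectral projection `P_K`: orthogonal projection onto `span{H_S : |S| ≤ K}`,
given by `P_K V = Σ_{|S|≤K} (⟨V,H_S⟩/2^N)·H_S`. -/
noncomputable def PK (N K : ℕ) (V : Finset (Fin N) → ℝ) : Finset (Fin N) → ℝ :=
  fun R => ∑ S ∈ Finset.univ.filter (fun S : Finset (Fin N) => S.card ≤ K),
    (inner' N V (Had N S) / 2 ^ N) * Had N S R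

/-- Diagonal operator `(TV)(R) = √(2|R|)·V(R)`. -/
noncomputable def Tdiag (N : ℕ) (V : Finset (Fin N) → ℝ) : Finset (Fin N) → ℝ :=
  fun R => Real.sqrt (2 * (R.card : ℝ)) * V R

/-- Boolean difference operator conjugated by the Hadamard transform:
`HBDO = T(αI − L)T + βL`. -/
noncomputable def HBDO (N : ℕ) (α β : ℝ) (V : Finset (Fin N) → ℝ) : Finset (Fin N) → ℝ :=
  fun R => Tdiag N (fun S => α * Tdiag N V S - Lap N (Tdiag N V) S) R + β * Lap N V R

/-- Hadamard transform `(HV)(R) = Σ_S (−1)^{|R∩S|} V(S)`. -/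
def Hmat (N : ℕ) (V : Finset (Fin N) → ℝ) : Finset (Fin N) → ℝ :=
  fun R => ∑ S : Finset (Fin N), Had N S R * V S

/-- Commutator `C = A₋A₊ − A₊A₋`. -/
def Cop (N : ℕ) (V : Finset (Fin N) → ℝ) : Finset (Fin N) → ℝ :=
  fun S => Aminus N (Aplus N V) S - Aplus N (Aminus N V) S

section Aux
variable {N : ℕ}

lemma suppOn_aplus {m : ℕ} {V : Finset (Fin N) → ℝ} (h : suppOn N m V) :
    suppOn N (m + 1) (Aplus N V) := by
  intro S hS
  refine Finset.sum_eq_zero fun s hs => h _ ?_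
  rw [Finset.card_erase_of_mem hs]
  have : 1 ≤ S.card := Finset.card_pos.mpr ⟨s, hs⟩
  omega

lemma suppOn_aplus_iter {m : ℕ} {V : Finset (Fin N) → ℝ} (h : suppOn N m V) (j : ℕ) :
    suppOn N (m + j) ((Aplus N)^[j] V) := by
  induction j with
  | zero => simpa using h
  | succ j ih =>
    rw [Function.iterate_succ_apply']
    exact (by omega : m + (j+1) = (m+j) + 1) ▸ suppOn_aplus ih

lemma suppOn_aminus {m : ℕ} {V : Finset (Fin N) → ℝ} (h : suppOn N m V) :
    suppOn N (m - 1) (Aminus N V) := by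
  intro R hR
  refine Finset.sum_eq_zero fun b hb => h _ ?_
  rw [Finset.card_insert_of_notMem (Finset.mem_compl.mp hb)]
  omega

lemma aplus_smul (c : ℝ) (V : Finset (Fin N) → ℝ) :
    Aplus N (c • V) = c • Aplus N V := by
  funext S; simp [Aplus, Finset.mul_sum]

lemma aminus_smul (c : ℝ) (V : Finset (Fin N) → ℝ) :
    Aminus N (c • V) = c • Aminus N V := by
  funext S; simp [Aminus, Finset.mul_sum]

lemma aminus_zero : Aminus N (0 : Finset (Fin N) → ℝ) = 0 := by
  funext S; simp [Aminus]

lemma aminus_iter_smul (n : ℕ) (c : ℝ) (V : Finset (Fin N) → ℝ) :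
    (Aminus N)^[n] (c • V) = c • (Aminus N)^[n] V := by
  induction n generalizing V with
  | zero => rfl
  | succ n ih => rw [Function.iterate_succ_apply, aminus_smul, ih, Function.iterate_succ_apply]

lemma aplus_sum {ι : Type*} (t : Finset ι) (f : ι → Finset (Fin N) → ℝ) :
    Aplus N (∑ i ∈ t, f i) = ∑ i ∈ t, Aplus N (f i) := by
  funext S
  simp only [Aplus, Finset.sum_apply]
  exact Finset.sum_comm

lemma inner'_comm (V U : Finset (Fin N) → ℝ) : inner' N V U = inner' N U V := by
  simp [inner', mul_comm]

lemma inner'_zero_right (V : Finset (Fin N) → ℝ) : inner' N V 0 = 0 := by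
  simp [inner']

lemma inner'_aplus (V U : Finset (Fin N) → ℝ) :
    inner' N (Aplus N V) U = inner' N V (Aminus N U) := by
  unfold inner' Aplus Aminus
  simp only [Finset.sum_mul, Finset.mul_sum]
  rw [Finset.sum_sigma', Finset.sum_sigma']
  refine Finset.sum_nbij' (fun p => ⟨p.1.erase p.2, p.2⟩) (fun p => ⟨insert p.2 p.1, p.2⟩)
    ?_ ?_ ?_ ?_ ?_
  · rintro ⟨S, s⟩ hp
    simp only [Finset.mem_sigma, Finset.mem_univ, true_and] at hp ⊢
    simp [Finset.mem_compl]
  · rintro ⟨T, b⟩ hp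
    simp only [Finset.mem_sigma, Finset.mem_univ, true_and, Finset.mem_compl] at hp ⊢
    simp
  · rintro ⟨S, s⟩ hp
    simp only [Finset.mem_sigma, Finset.mem_univ, true_and] at hp
    simp [Finset.insert_erase hp]
  · rintro ⟨T, b⟩ hp
    simp only [Finset.mem_sigma, Finset.mem_univ, true_and, Finset.mem_compl] at hp
    simp [Finset.erase_insert hp]
  · rintro ⟨S, s⟩ hp
    simp only [Finset.mem_sigma, Finset.mem_univ, true_and] at hp
    simp [Finset.insert_erase hp]

end Aux
section Aux2
variable {N : ℕ}

lemma aplus_zero : Aplus N (0 : Finset (Fin N) → ℝ) = 0 := by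
  funext S; simp [Aplus]

lemma memW_aminus {k : ℕ} {W : Finset (Fin N) → ℝ} (h : memW N k W) :
    Aminus N W = 0 := by
  have h2 := h.2 (Aminus N W) (suppOn_aminus h.1)
  have key : inner' N (Aminus N W) (Aminus N W) = 0 := by
    rw [← inner'_aplus, inner'_comm]; exact h2
  funext S
  have hnn : ∀ T ∈ (Finset.univ : Finset (Finset (Fin N))),
      0 ≤ Aminus N W T * Aminus N W T := fun T _ => mul_self_nonneg _
  have := (Finset.sum_eq_zero_iff_of_nonneg hnn).mp key S (Finset.mem_univ S)
  simpa [mul_self_eq_zero] using this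

lemma aminus_aplus_apply (V : Finset (Fin N) → ℝ) (S : Finset (Fin N)) :
    Aminus N (Aplus N V) S = Aplus N (Aminus N V) S + ((N : ℝ) - 2 * S.card) * V S := by
  unfold Aplus Aminus
  have hL : ∀ b ∈ Sᶜ, ∑ s ∈ insert b S, V ((insert b S).erase s)
      = V S + ∑ s ∈ S, V (insert b (S.erase s)) := by
    intro b hb
    have hbS : b ∉ S := Finset.mem_compl.mp hb
    rw [Finset.sum_insert hbS, Finset.erase_insert hbS]
    congr 1
    refine Finset.sum_congr rfl fun s hs => ?_
    have : b ≠ s := fun h => hbS (h ▸ hs)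
    rw [Finset.erase_insert_of_ne this]
  have hR : ∀ s ∈ S, ∑ b ∈ (S.erase s)ᶜ, V (insert b (S.erase s))
      = V S + ∑ b ∈ Sᶜ, V (insert b (S.erase s)) := by
    intro s hs
    rw [Finset.compl_erase, Finset.sum_insert (by simp [hs]), Finset.insert_erase hs]
  rw [Finset.sum_congr rfl hL, Finset.sum_congr rfl hR,
    Finset.sum_add_distrib, Finset.sum_add_distrib, Finset.sum_const, Finset.sum_const,
    Finset.sum_comm]
  have hcS : S.card ≤ N := by simpa using Finset.card_le_univ S
  have hc : Sᶜ.card = N - S.card := by simp [Finset.card_compl]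
  rw [hc]
  simp only [nsmul_eq_mul]
  rw [Nat.cast_sub hcS]
  ring

lemma aminus_aplus_of_supp {m : ℕ} {V : Finset (Fin N) → ℝ} (h : suppOn N m V) :
    Aminus N (Aplus N V) = Aplus N (Aminus N V) + ((N : ℝ) - 2 * m) • V := by
  funext S
  rw [Pi.add_apply, Pi.smul_apply, smul_eq_mul, aminus_aplus_apply]
  by_cases hS : S.card = m
  · rw [hS]
  · rw [h S hS]; ring

lemma exists_scalar {k : ℕ} {W : Finset (Fin N) → ℝ} (hs : suppOn N k W)
    (h0 : Aminus N W = 0) (j : ℕ) :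
    ∃ c : ℝ, Aminus N ((Aplus N)^[j + 1] W) = c • (Aplus N)^[j] W := by
  induction j with
  | zero =>
    refine ⟨(N : ℝ) - 2 * k, ?_⟩
    rw [zero_add, Function.iterate_one, aminus_aplus_of_supp hs, h0, aplus_zero]
    simp
  | succ j ih =>
    obtain ⟨c, hc⟩ := ih
    refine ⟨c + ((N : ℝ) - 2 * (k + (j + 1))), ?_⟩
    rw [Function.iterate_succ_apply' (Aplus N) (j + 1) W,
      aminus_aplus_of_supp (suppOn_aplus_iter hs (j + 1)), hc, aplus_smul,
      ← Function.iterate_succ_apply' (Aplus N) j W]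
    funext S
    simp only [Pi.add_apply, Pi.smul_apply, smul_eq_mul]
    push_cast
    ring

lemma vanish_core {k : ℕ} {W : Finset (Fin N) → ℝ} (hs : suppOn N k W)
    (h0 : Aminus N W = 0) (b : ℕ) :
    (Aminus N)^[b + 1] ((Aplus N)^[b] W) = 0 := by
  induction b with
  | zero => simpa using h0
  | succ b ih =>
    obtain ⟨c, hc⟩ := exists_scalar hs h0 b
    rw [Function.iterate_succ_apply (Aminus N) (b + 1), hc, aminus_iter_smul, ih, smul_zero]

lemma vanish {k a b : ℕ} {W : Finset (Fin N) → ℝ} (hs : suppOn N k W)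
    (h0 : Aminus N W = 0) (hab : b < a) :
    (Aminus N)^[a] ((Aplus N)^[b] W) = 0 := by
  have ha : a = (a - (b + 1)) + (b + 1) := by omega
  rw [ha, Function.iterate_add_apply, vanish_core hs h0 b]
  exact Function.iterate_fixed aminus_zero _

lemma inner'_aplus_iter (a : ℕ) (V U : Finset (Fin N) → ℝ) :
    inner' N ((Aplus N)^[a] V) U = inner' N V ((Aminus N)^[a] U) := by
  induction a generalizing U with
  | zero => rfl
  | succ a ih =>
    rw [Function.iterate_succ_apply' (Aplus N), inner'_aplus, ih,
      ← Function.iterate_succ_apply (Aminus N)]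

end Aux2
section Aux3
variable {N : ℕ}

/-- The submodule of vertex functions supported on `Σ_m`. -/
def suppSub (N m : ℕ) : Submodule ℝ (EuclideanSpace ℝ (Finset (Fin N))) where
  carrier := {V | suppOn N m V}
  add_mem' := by
    intro a b ha hb S hS
    have : (a + b) S = a S + b S := rfl
    rw [this, ha S hS, hb S hS, add_zero]
  zero_mem' := fun S _ => rfl
  smul_mem' := by
    intro c a ha S hS
    have : (c • a) S = c * a S := rfl
    rw [this, ha S hS, mul_zero]

/-- `Aplus` as a linear map on Euclidean space. -/
def AplusLM (N : ℕ) :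
    EuclideanSpace ℝ (Finset (Fin N)) →ₗ[ℝ] EuclideanSpace ℝ (Finset (Fin N)) where
  toFun V := WithLp.toLp 2 (Aplus N V)
  map_add' V U := by
    ext S
    simp [Aplus, Finset.sum_add_distrib]
  map_smul' c V := by
    ext S
    simp [Aplus, Finset.mul_sum]

lemma inner'_eq_inner (V U : EuclideanSpace ℝ (Finset (Fin N))) :
    inner' N V U = (inner ℝ V U : ℝ) := by
  rw [PiLp.inner_apply]
  simp [inner', RCLike.inner_apply, starRingEnd_apply, mul_comm]

/-- Orthogonal decomposition step: peel off the `W_{r+1}` component. -/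
lemma proj_decomp (N r : ℕ) (V : Finset (Fin N) → ℝ) (hV : suppOn N (r + 1) V) :
    ∃ U W' : Finset (Fin N) → ℝ, suppOn N r U ∧ memW N (r + 1) W' ∧
      V = W' + Aplus N U := by
  classical
  set K : Submodule ℝ (EuclideanSpace ℝ (Finset (Fin N))) :=
    (suppSub N r).map (AplusLM N) with hK
  set VE : EuclideanSpace ℝ (Finset (Fin N)) := WithLp.toLp 2 V with hVE
  set Vp : EuclideanSpace ℝ (Finset (Fin N)) := (↑(K.orthogonalProjectionOnto VE) : EuclideanSpace ℝ (Finset (Fin N))) with hVp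
  have hVpK : Vp ∈ K := SetLike.coe_mem (K.orthogonalProjectionOnto VE)
  obtain ⟨U, hU, hAU⟩ := Submodule.mem_map.mp hVpK
  have hAU' : Aplus N U = Vp := by rw [← hAU]; rfl
  have hUsupp : suppOn N r U := hU
  have horth : VE - Vp ∈ Kᗮ := K.sub_starProjection_mem_orthogonal VE
  refine ⟨U, VE - Vp, hUsupp, ⟨?_, ?_⟩, ?_⟩
  · intro S hS
    have h1 : V S = 0 := hV S hS
    have h2 : Vp S = 0 := by
      rw [← hAU']
      exact suppOn_aplus hUsupp S hS
    show VE S - Vp S = 0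
    rw [hVE, WithLp.ofLp_toLp, h1, h2, sub_zero]
  · intro U₀ hU₀
    have hmem : (WithLp.toLp 2 (Aplus N U₀) : EuclideanSpace ℝ (Finset (Fin N))) ∈ K :=
      Submodule.mem_map.mpr ⟨WithLp.toLp 2 U₀, hU₀, rfl⟩
    have h0 := (Submodule.mem_orthogonal K _).mp horth _ hmem
    rw [inner'_comm]
    calc inner' N (Aplus N U₀) (VE - Vp)
        = (@inner ℝ (EuclideanSpace ℝ (Finset (Fin N))) _ (WithLp.toLp 2 (Aplus N U₀)) (VE - Vp)) :=
          inner'_eq_inner (WithLp.toLp 2 (Aplus N U₀)) (VE - Vp)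
      _ = 0 := h0
  · funext S
    show V S = (VE S - Vp S) + Aplus N U S
    rw [hAU', hVE, WithLp.ofLp_toLp]
    ring

/-- Existence of the decomposition, by induction on `r`. -/
lemma exists_decomp (N : ℕ) : ∀ r : ℕ, ∀ V : Finset (Fin N) → ℝ, suppOn N r V →
    ∃ W : ℕ → Finset (Fin N) → ℝ, (∀ k ≤ r, memW N k (W k)) ∧
      V = ∑ k ∈ Finset.range (r + 1), (Aplus N)^[r - k] (W k) := by
  intro r
  induction r with
  | zero =>
    intro V hV
    refine ⟨fun _ => V, ?_, ?_⟩
    · intro k hk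
      interval_cases k
      refine ⟨hV, fun U hU => ?_⟩
      refine Finset.sum_eq_zero fun S _ => ?_
      by_cases hS : S.card = 0
      · have hSe : S = ∅ := Finset.card_eq_zero.mp hS
        subst hSe
        simp [Aplus]
      · simp [hV S hS]
    · simp
  | succ r ih =>
    intro V hV
    obtain ⟨U, W', hU, hW', hsplit⟩ := proj_decomp N r V hV
    obtain ⟨W, hWmem, hWsum⟩ := ih U hU
    refine ⟨fun k => if k = r + 1 then W' else W k, ?_, ?_⟩
    · intro k hk
      by_cases hkr : k = r + 1
      · simpa [hkr] using hW'
      · have : k ≤ r := by omega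
        simpa [hkr] using hWmem k this
    · rw [Finset.sum_range_succ]
      simp only [Nat.sub_self, Function.iterate_zero, id_eq, if_pos rfl]
      have hterm : ∀ k ∈ Finset.range (r + 1),
          (Aplus N)^[r + 1 - k] (if k = r + 1 then W' else W k)
            = Aplus N ((Aplus N)^[r - k] (W k)) := by
        intro k hk
        have hkr : k ≤ r := by
          have := Finset.mem_range.mp hk; omega
        rw [if_neg (by omega), (by omega : r + 1 - k = (r - k) + 1),
          Function.iterate_succ_apply']
      rw [Finset.sum_congr rfl hterm, ← aplus_sum, ← hWsum, hsplit]
      funext S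
      show W' S + Aplus N U S = Aplus N U S + W' S
      ring

end Aux3
/-- every `V` supported on `Σ_r` decomposes as `V = Σ_{k=0}^{r} A₊^{r−k}W_k`
with `W_k ∈ W_k`; moreover for any choice of `W_k ∈ W_k`, the vectors `A₊^{r−k}W_k`
are pairwise orthogonal. -/
theorem sphere_decomposition (N r : ℕ) (hN : 1 ≤ N) (hr : r ≤ N) :
    (∀ V : Finset (Fin N) → ℝ, suppOn N r V →
      ∃ W : ℕ → Finset (Fin N) → ℝ, (∀ k ≤ r, memW N k (W k)) ∧
        V = ∑ k ∈ Finset.range (r + 1), (Aplus N)^[r - k] (W k)) ∧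
    (∀ W : ℕ → Finset (Fin N) → ℝ, (∀ k ≤ r, memW N k (W k)) →
      ∀ k₁ ≤ r, ∀ k₂ ≤ r, k₁ ≠ k₂ →
        inner' N ((Aplus N)^[r - k₁] (W k₁)) ((Aplus N)^[r - k₂] (W k₂)) = 0) := by
  constructor
  · intro V hV
    exact exists_decomp N r V hV
  · intro W hW k₁ hk₁ k₂ hk₂ hne
    have main : ∀ a b, a ≤ r → b ≤ r → a < b →
        inner' N ((Aplus N)^[r - a] (W a)) ((Aplus N)^[r - b] (W b)) = 0 := by
      intro a b ha hb hab
      rw [inner'_aplus_iter]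
      have h0 : Aminus N (W b) = 0 := memW_aminus (hW b hb)
      rw [vanish (hW b hb).1 h0 (by omega : r - b < r - a), inner'_zero_right]
    rcases lt_or_gt_of_ne hne with h | h
    · exact main k₁ k₂ hk₁ hk₂ h
    · rw [inner'_comm]
      exact main k₂ k₁ hk₂ hk₁ h
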